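/- Let α ≤ 1/4, let t ≥ 0, let ψ ∈ C^∞(𝕋) and let Z_N be the second Picard iterate of BBM with renormalized truncated Gaussian data. Write ⟨Z_N(t), ψ⟩ = I₂(f^t_{N,ψ}) as a double Wiener–Itô integral, where f̂^t_{N,ψ}(n₁,n₂) = 1_{|n₁|,|n₂|≤N} C_{α,N}² e^{tφ(n₁+n₂)} φ(n₁+n₂) conj(ψ̂(n₁+n₂)) ⟨n₁⟩^{-α}⟨n₂⟩^{-α} J_{n₁,n₂}(t), with J_{n₁,n₂}(t) = ∫₀^t e^{-t'(φ(n₁+n₂)-φ(n₁)-φ(n₂))} dt'. Then the one-contraction norm tends to zero: lim_{N→∞} ‖f^t_{N,ψ} ⊗₁ f^t_{N,ψ}‖_{L²(𝕋²)} = 0. -/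

import Mathlib

open Filter MeasureTheory intervalIntegral Complex

/-- The BBM Fourier multiplier symbol `φ(n) = -i n / (1 + n²)`. -/
noncomputable def phiSym (n : ℤ) : ℂ := (-Complex.I * (n : ℂ)) / (1 + (n : ℂ) ^ 2)

/-- The Japanese bracket `⟨n⟩ = √(1 + n²)`. -/
noncomputable def jbr (n : ℤ) : ℝ := Real.sqrt (1 + (n : ℝ) ^ 2)

/-- The renormalization constant `C_{α,N} = (∑_{|n| ≤ N} 2 ⟨n⟩^{-4α})^{-1/4}`. -/
noncomputable def renC (α : ℝ) (N : ℕ) : ℝ :=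
  (∑ n ∈ Finset.Icc (-(N : ℤ)) (N : ℤ), 2 / jbr n ^ (4 * α)) ^ (-(1 / 4 : ℝ))

/-- `J_{n₁,n₂}(t) = ∫₀ᵗ e^{-t'(φ(n₁+n₂) - φ(n₁) - φ(n₂))} dt'`. -/
noncomputable def Jker (n₁ n₂ : ℤ) (t : ℝ) : ℂ :=
  ∫ t' in (0 : ℝ)..t,
    Complex.exp (-(t' : ℂ) * (phiSym (n₁ + n₂) - phiSym n₁ - phiSym n₂))

/-- The kernel `f̂^t_{N,ψ}(n₁,n₂)` of the double Wiener–Itô integral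
representing `⟨Z_N(t), ψ⟩`. -/
noncomputable def Fker (α : ℝ) (N : ℕ) (t : ℝ) (ψ : ℤ → ℂ) (n₁ n₂ : ℤ) : ℂ :=
  if |n₁| ≤ (N : ℤ) ∧ |n₂| ≤ (N : ℤ) then
    (renC α N ^ 2 : ℝ) * Complex.exp ((t : ℂ) * phiSym (n₁ + n₂)) * phiSym (n₁ + n₂)
      * starRingEnd ℂ (ψ (n₁ + n₂)) / ((jbr n₁ ^ α * jbr n₂ ^ α : ℝ))
      * Jker n₁ n₂ t
  else 0

/-! ### basic bracket lemmas -/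

lemma jbr_one_le (n : ℤ) : 1 ≤ jbr n := by
  rw [jbr, Real.one_le_sqrt]
  nlinarith [sq_nonneg ((n:ℝ))]

lemma jbr_pos (n : ℤ) : 0 < jbr n := lt_of_lt_of_le one_pos (jbr_one_le n)

lemma jbr_nonneg (n : ℤ) : 0 ≤ jbr n := (jbr_pos n).le

lemma jbr_sq (n : ℤ) : jbr n ^ 2 = 1 + (n:ℝ)^2 := Real.sq_sqrt (by positivity)

lemma abs_le_jbr (n : ℤ) : |(n:ℝ)| ≤ jbr n := by
  rw [jbr, ← Real.sqrt_sq_eq_abs]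
  exact Real.sqrt_le_sqrt (by nlinarith)

lemma jbr_mono {m k : ℤ} (h : |m| ≤ k) : jbr m ≤ jbr k := by
  rw [jbr, jbr]
  apply Real.sqrt_le_sqrt
  have h1 : |(m:ℝ)| ≤ (k:ℝ) := by exact_mod_cast h
  nlinarith [abs_nonneg ((m:ℝ)), _root_.sq_abs ((m:ℝ)), _root_.sq_abs ((k:ℝ)), abs_nonneg ((k:ℝ)),
    le_abs_self ((k:ℝ))]

lemma jbr_le_succ {n : ℤ} (h : 0 ≤ n) : jbr n ≤ (n:ℝ) + 1 := by
  rw [jbr]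
  have h0 : (0:ℝ) ≤ (n:ℝ) := by exact_mod_cast h
  have : (1 + (n:ℝ)^2) ≤ ((n:ℝ)+1)^2 := by nlinarith
  calc Real.sqrt (1 + (n:ℝ)^2) ≤ Real.sqrt (((n:ℝ)+1)^2) := Real.sqrt_le_sqrt this
  _ = (n:ℝ)+1 := Real.sqrt_sq (by linarith)

/-! ### phiSym and Jker -/

lemma one_add_sq_ne (n : ℤ) : (1 : ℂ) + (n:ℂ)^2 ≠ 0 := by
  have h : ((1 + (n:ℝ)^2 : ℝ) : ℂ) = 1 + (n:ℂ)^2 := by push_cast; ring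
  rw [← h]
  exact_mod_cast ne_of_gt (by positivity : (0:ℝ) < 1 + (n:ℝ)^2)

lemma phiSym_eq (n : ℤ) : phiSym n = ((-(n:ℝ)/(1+(n:ℝ)^2) : ℝ) : ℂ) * Complex.I := by
  have h := one_add_sq_ne n
  rw [phiSym, div_eq_iff h]
  push_cast
  rw [div_mul_eq_mul_div, div_mul_eq_mul_div, eq_div_iff (by exact_mod_cast h)]
  ring

lemma norm_phiSym_le (n : ℤ) : ‖phiSym n‖ ≤ 1/2 := by
  rw [phiSym_eq]
  rw [norm_mul, Complex.norm_I, mul_one, Complex.norm_real, Real.norm_eq_abs]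
  rw [abs_div, abs_neg]
  rw [_root_.abs_of_pos (by positivity : (0:ℝ) < 1 + (n:ℝ)^2)]
  rw [div_le_iff₀ (by positivity)]
  nlinarith [sq_nonneg (|(n:ℝ)| - 1), abs_nonneg ((n:ℝ)), _root_.sq_abs ((n:ℝ))]

lemma norm_exp_mul_phi (x : ℝ) (n : ℤ) : ‖Complex.exp ((x:ℂ) * phiSym n)‖ = 1 := by
  rw [phiSym_eq]
  have : (x:ℂ) * (((-(n:ℝ)/(1+(n:ℝ)^2) : ℝ) : ℂ) * Complex.I)
      = ((x * (-(n:ℝ)/(1+(n:ℝ)^2)) : ℝ) : ℂ) * Complex.I := by push_cast; ring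
  rw [this, Complex.norm_exp_ofReal_mul_I]

lemma Jker_norm_le (n₁ n₂ : ℤ) (t : ℝ) (ht : 0 ≤ t) : ‖Jker n₁ n₂ t‖ ≤ t := by
  have h : ∀ x ∈ Set.uIoc (0:ℝ) t,
      ‖Complex.exp (-(x : ℂ) * (phiSym (n₁ + n₂) - phiSym n₁ - phiSym n₂))‖ ≤ 1 := by
    intro x _
    have e : -(x : ℂ) * (phiSym (n₁ + n₂) - phiSym n₁ - phiSym n₂)
        = ((-x * (-(((n₁+n₂):ℤ):ℝ)/(1+(((n₁+n₂):ℤ):ℝ)^2) - -(n₁:ℝ)/(1+(n₁:ℝ)^2)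
            - -(n₂:ℝ)/(1+(n₂:ℝ)^2)) : ℝ) : ℂ) * Complex.I := by
      rw [phiSym_eq, phiSym_eq, phiSym_eq]
      push_cast
      ring
    rw [e, Complex.norm_exp_ofReal_mul_I]
  calc ‖Jker n₁ n₂ t‖ ≤ 1 * |t - 0| := intervalIntegral.norm_integral_le_of_norm_le_const h
  _ = t := by rw [one_mul, sub_zero, _root_.abs_of_nonneg ht]

/-! ### Sden, renC, gfun -/

noncomputable def Sden (α : ℝ) (N : ℕ) : ℝ :=
  ∑ n ∈ Finset.Icc (-(N : ℤ)) (N : ℤ), 2 / jbr n ^ (4 * α)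

lemma Sden_pos (α : ℝ) (N : ℕ) : 0 < Sden α N := by
  apply Finset.sum_pos
  · intro n _
    have h1 := Real.rpow_pos_of_pos (jbr_pos n) (4*α)
    positivity
  · exact ⟨0, by simp⟩

lemma renC_nonneg (α : ℝ) (N : ℕ) : 0 ≤ renC α N :=
  Real.rpow_nonneg (le_of_lt (Sden_pos α N)) _

lemma renC_pow_four (α : ℝ) (N : ℕ) : renC α N ^ (4:ℕ) = (Sden α N)⁻¹ := by
  have h : renC α N = (Sden α N) ^ (-(1/4:ℝ)) := rfl
  rw [h, ← Real.rpow_natCast ((Sden α N) ^ (-(1/4:ℝ))) 4,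
    ← Real.rpow_mul (le_of_lt (Sden_pos α N))]
  norm_num
  exact Real.rpow_neg_one _

noncomputable def gfun (α : ℝ) (n : ℤ) : ℝ := jbr n ^ (-α)

lemma gfun_pos (α : ℝ) (n : ℤ) : 0 < gfun α n := Real.rpow_pos_of_pos (jbr_pos n) _

lemma gfun_nonneg (α : ℝ) (n : ℤ) : 0 ≤ gfun α n := (gfun_pos α n).le

lemma sum_gfun_pow_four (α : ℝ) (N : ℕ) :
    ∑ n ∈ Finset.Icc (-(N : ℤ)) (N : ℤ), gfun α n ^ (4:ℕ) = Sden α N / 2 := by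
  rw [Sden, Finset.sum_div]
  apply Finset.sum_congr rfl
  intro n _
  have h1 : gfun α n ^ (4:ℕ) = jbr n ^ ((-α) * 4) := by
    rw [gfun, ← Real.rpow_natCast (jbr n ^ (-α)) 4, ← Real.rpow_mul (jbr_nonneg n)]
    norm_num
  rw [h1, show (-α) * 4 = -(4*α) by ring, Real.rpow_neg (jbr_nonneg n)]
  have hx := Real.rpow_pos_of_pos (jbr_pos n) (4*α)
  field_simp

/-! ### Lam -/

noncomputable def Lam : ℝ := ∑' j : ℤ, ((1:ℝ) + (j:ℝ)^2)⁻¹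

lemma summable_u : Summable (fun j : ℤ => ((1:ℝ) + (j:ℝ)^2)⁻¹) := by
  have hbase : Summable (fun n : ℕ => (((n:ℝ)+1)^2)⁻¹) := by
    have h0 : Summable (fun n : ℕ => ((n:ℝ)^2)⁻¹) := Real.summable_nat_pow_inv.2 one_lt_two
    have h1 := (summable_nat_add_iff (f := fun n : ℕ => ((n:ℝ)^2)⁻¹) 1).2 h0
    apply h1.congr
    intro n
    push_cast
    ring_nf
  have hshift : Summable (fun n : ℕ => ((1:ℝ) + ((n:ℝ)+1)^2)⁻¹) := by
    have hle : ∀ n : ℕ, ((1:ℝ) + ((n:ℝ)+1)^2)⁻¹ ≤ (((n:ℝ)+1)^2)⁻¹ := by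
      intro n
      apply inv_anti₀ (by positivity)
      nlinarith [sq_nonneg ((n:ℝ)+1)]
    exact Summable.of_nonneg_of_le (fun n => by positivity) hle hbase
  have hnat : Summable (fun n : ℕ => ((1:ℝ) + (n:ℝ)^2)⁻¹) := by
    have h2 := (summable_nat_add_iff (f := fun n : ℕ => ((1:ℝ) + (n:ℝ)^2)⁻¹) 1).1 ?_
    · exact h2
    · apply hshift.congr
      intro n
      push_cast
      ring_nf
  apply Summable.of_nat_of_neg
  · exact hnat
  · apply hnat.congr
    intro n
    push_cast
    ring_nf
  
lemma Lam_nonneg : 0 ≤ Lam := tsum_nonneg (fun j => by positivity)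

lemma sum_u_le (s : Finset ℤ) (k : ℤ → ℤ) (hk : Function.Injective k) :
    ∑ m ∈ s, ((1:ℝ) + ((k m : ℤ):ℝ)^2)⁻¹ ≤ Lam := by
  have h1 : ∑ j ∈ s.image k, ((1:ℝ) + (j:ℝ)^2)⁻¹
      = ∑ m ∈ s, ((1:ℝ) + ((k m : ℤ):ℝ)^2)⁻¹ :=
    Finset.sum_image (fun x _ y _ h => hk h)
  rw [← h1]
  exact Summable.sum_le_tsum _ (fun _ _ => by positivity) summable_u

lemma v_le_u (j : ℤ) : ((jbr j ^ (4:ℕ))⁻¹ : ℝ) ≤ ((1:ℝ) + (j:ℝ)^2)⁻¹ := by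
  apply inv_anti₀ (by positivity)
  calc (1 + (j:ℝ)^2) = jbr j ^ 2 := (jbr_sq j).symm
  _ ≤ jbr j ^ 4 := pow_le_pow_right₀ (jbr_one_le j) (by norm_num)

lemma v_le_one (j : ℤ) : ((jbr j ^ (4:ℕ))⁻¹ : ℝ) ≤ 1 := by
  exact inv_le_one_of_one_le₀ (one_le_pow₀ (jbr_one_le j))

lemma v_sq_le_u (j : ℤ) : (((jbr j ^ (4:ℕ))⁻¹)^2 : ℝ) ≤ ((1:ℝ) + (j:ℝ)^2)⁻¹ := by
  calc (((jbr j ^ (4:ℕ))⁻¹)^2 : ℝ) = (jbr j ^ (4:ℕ))⁻¹ * (jbr j ^ (4:ℕ))⁻¹ := sq _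
  _ ≤ 1 * ((1:ℝ) + (j:ℝ)^2)⁻¹ := by
      apply mul_le_mul (v_le_one j) (v_le_u j) (by positivity) zero_le_one
  _ = ((1:ℝ) + (j:ℝ)^2)⁻¹ := one_mul _

/-! ### Peetre-type inequality -/

lemma peetre (a b : ℤ) :
    ((jbr a ^ (8:ℕ))⁻¹ * (jbr b ^ (8:ℕ))⁻¹ : ℝ)
      ≤ 4 * ((jbr (b - a) ^ (4:ℕ))⁻¹ * (jbr a ^ (4:ℕ))⁻¹) := by
  set A := jbr a with hA
  set B := jbr b with hB
  set D := jbr (b - a) with hD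
  have hA1 : 1 ≤ A := jbr_one_le a
  have hB1 : 1 ≤ B := jbr_one_le b
  have hD0 : 0 < D := jbr_pos _
  have hA0 : 0 < A := jbr_pos _
  have hB0 : 0 < B := jbr_pos _
  have hD2 : D^2 ≤ 2*(A^2*B^2) := by
    rw [hA, hB, hD, jbr_sq, jbr_sq, jbr_sq]
    push_cast
    nlinarith [sq_nonneg ((a:ℝ)+(b:ℝ)), sq_nonneg ((a:ℝ)*(b:ℝ))]
  have h1 : (D^2)^2 ≤ (2*(A^2*B^2))^2 := pow_le_pow_left₀ (sq_nonneg D) hD2 2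
  have hB48 : B^4 ≤ B^8 := pow_le_pow_right₀ hB1 (by norm_num)
  have key : D^4*A^4 ≤ 4*(A^8*B^8) := by nlinarith [pow_pos hA0 4, pow_pos hA0 8, pow_pos hB0 4]
  rw [← mul_inv, ← mul_inv]
  have h2 : (A^8*B^8)⁻¹ ≤ (D^4*A^4/4)⁻¹ :=
    inv_anti₀ (by positivity) (by linarith)
  rwa [inv_div, div_eq_mul_inv] at h2

/-! ### Fker bounds and support -/

lemma Fker_norm_le (α : ℝ) (N : ℕ) (t : ℝ) (ht : 0 ≤ t) (ψ : ℤ → ℂ) (n m : ℤ) :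
    ‖Fker α N t ψ n m‖ ≤ renC α N ^ 2 * (1/2) * ‖ψ (n+m)‖
      * (gfun α n * gfun α m) * t := by
  have hg : ∀ j : ℤ, (0:ℝ) < gfun α j := gfun_pos α
  by_cases h : |n| ≤ (N : ℤ) ∧ |m| ≤ (N : ℤ)
  · rw [Fker, if_pos h]
    have hpos : (0:ℝ) < jbr n ^ α * jbr m ^ α := by
      have h1 := Real.rpow_pos_of_pos (jbr_pos n) α
      have h2 := Real.rpow_pos_of_pos (jbr_pos m) α
      positivity
    have hinv : (jbr n ^ α * jbr m ^ α)⁻¹ = gfun α n * gfun α m := by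
      rw [mul_inv, gfun, gfun, Real.rpow_neg (jbr_nonneg n), Real.rpow_neg (jbr_nonneg m)]
    calc ‖(renC α N ^ 2 : ℝ) * Complex.exp ((t : ℂ) * phiSym (n + m)) * phiSym (n + m)
          * starRingEnd ℂ (ψ (n + m)) / ((jbr n ^ α * jbr m ^ α : ℝ)) * Jker n m t‖
        = (renC α N ^ 2 * ‖ψ (n+m)‖ * (gfun α n * gfun α m))
            * (‖phiSym (n+m)‖ * ‖Jker n m t‖) := by
          rw [norm_mul, norm_div, norm_mul, norm_mul, norm_mul, Complex.norm_real,
            Complex.norm_real, RCLike.norm_conj, norm_exp_mul_phi,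
            Real.norm_eq_abs, Real.norm_eq_abs, _root_.abs_of_nonneg (sq_nonneg _),
            _root_.abs_of_pos hpos, div_eq_mul_inv, hinv]
          ring
      _ ≤ (renC α N ^ 2 * ‖ψ (n+m)‖ * (gfun α n * gfun α m)) * ((1/2) * t) := by
          apply mul_le_mul_of_nonneg_left
          · exact mul_le_mul (norm_phiSym_le _) (Jker_norm_le _ _ _ ht)
              (norm_nonneg _) (by norm_num)
          · have h1 := sq_nonneg (renC α N)
            have h2 := norm_nonneg (ψ (n+m))
            have h3 := (mul_pos (hg n) (hg m)).le
            positivity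
      _ = renC α N ^ 2 * (1/2) * ‖ψ (n+m)‖ * (gfun α n * gfun α m) * t := by ring
  · rw [Fker, if_neg h, norm_zero]
    have h1 := sq_nonneg (renC α N)
    have h2 := norm_nonneg (ψ (n+m))
    have h3 := (mul_pos (hg n) (hg m)).le
    positivity

lemma Fker_zero_right (α : ℝ) (N : ℕ) (t : ℝ) (ψ : ℤ → ℂ) (n m : ℤ)
    (h : ¬ |m| ≤ (N:ℤ)) : Fker α N t ψ n m = 0 := by
  rw [Fker, if_neg]; tauto

lemma Fker_zero_left (α : ℝ) (N : ℕ) (t : ℝ) (ψ : ℤ → ℂ) (n m : ℤ)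
    (h : ¬ |n| ≤ (N:ℤ)) : Fker α N t ψ n m = 0 := by
  rw [Fker, if_neg]; tauto

lemma memI_iff (N : ℕ) (n : ℤ) : n ∈ Finset.Icc (-(N:ℤ)) (N:ℤ) ↔ |n| ≤ (N:ℤ) := by
  rw [Finset.mem_Icc, abs_le]

/-! ### reduction of tsums to finite sums -/

lemma tsum_red (α : ℝ) (N : ℕ) (t : ℝ) (ψ : ℤ → ℂ) :
    (∑' p : ℤ × ℤ,
        ‖∑' m : ℤ, Fker α N t ψ p.1 m * starRingEnd ℂ (Fker α N t ψ p.2 m)‖ ^ 2)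
    = ∑ p ∈ (Finset.Icc (-(N:ℤ)) (N:ℤ)) ×ˢ (Finset.Icc (-(N:ℤ)) (N:ℤ)),
        ‖∑ m ∈ Finset.Icc (-(N:ℤ)) (N:ℤ),
          Fker α N t ψ p.1 m * starRingEnd ℂ (Fker α N t ψ p.2 m)‖ ^ 2 := by
  set I := Finset.Icc (-(N:ℤ)) (N:ℤ) with hI
  have hinner : ∀ p : ℤ × ℤ,
      (∑' m : ℤ, Fker α N t ψ p.1 m * starRingEnd ℂ (Fker α N t ψ p.2 m))
      = ∑ m ∈ I, Fker α N t ψ p.1 m * starRingEnd ℂ (Fker α N t ψ p.2 m) := by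
    intro p
    apply tsum_eq_sum
    intro m hm
    rw [Fker_zero_right α N t ψ p.1 m (by rw [hI, memI_iff] at hm; exact hm), zero_mul]
  have houter : ∀ p : ℤ × ℤ, p ∉ I ×ˢ I →
      ‖∑' m : ℤ, Fker α N t ψ p.1 m * starRingEnd ℂ (Fker α N t ψ p.2 m)‖ ^ 2 = 0 := by
    intro p hp
    rw [hinner p]
    rw [Finset.mem_product] at hp
    push_neg at hp
    have hz : ∀ m ∈ I, Fker α N t ψ p.1 m * starRingEnd ℂ (Fker α N t ψ p.2 m) = 0 := by
      intro m _
      by_cases h1 : p.1 ∈ I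
      · have h2 := hp h1
        rw [Fker_zero_left α N t ψ p.2 m (by rw [memI_iff] at h2; exact h2), map_zero,
          mul_zero]
      · rw [Fker_zero_left α N t ψ p.1 m (by rw [memI_iff] at h1; exact h1), zero_mul]
    rw [Finset.sum_eq_zero hz, norm_zero]
    norm_num
  rw [tsum_eq_sum (s := I ×ˢ I) houter]
  exact Finset.sum_congr rfl (fun p _ => by rw [hinner p])
lemma pair_bound (α t C : ℝ) (ht : 0 ≤ t) (hC0 : 0 ≤ C) (ψ : ℤ → ℂ)
    (hC : ∀ j : ℤ, ‖ψ j‖ ≤ C * (jbr j ^ (8:ℕ))⁻¹) (N : ℕ) (γ : ℝ) (hγ0 : 0 ≤ γ)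
    (hγ : ∀ m ∈ Finset.Icc (-(N:ℤ)) (N:ℤ), gfun α m ^ 2 ≤ γ) (n₁ n₂ : ℤ) :
    ‖∑ m ∈ Finset.Icc (-(N:ℤ)) (N:ℤ),
        Fker α N t ψ n₁ m * starRingEnd ℂ (Fker α N t ψ n₂ m)‖
      ≤ (Sden α N)⁻¹ * (C^2 * t^2 * Lam) * γ * (gfun α n₁ * gfun α n₂)
          * (jbr (n₂ - n₁) ^ (4:ℕ))⁻¹ := by
  have hg1 := gfun_nonneg α n₁
  have hg2 := gfun_nonneg α n₂
  have hS := Sden_pos α N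
  have hvd : (0:ℝ) ≤ (jbr (n₂ - n₁) ^ (4:ℕ))⁻¹ := by
    have := jbr_pos (n₂ - n₁); positivity
  have key : ∀ m ∈ Finset.Icc (-(N:ℤ)) (N:ℤ),
      ‖Fker α N t ψ n₁ m * starRingEnd ℂ (Fker α N t ψ n₂ m)‖
      ≤ ((Sden α N)⁻¹ * (C^2 * t^2) * γ * (gfun α n₁ * gfun α n₂)
          * (jbr (n₂ - n₁) ^ (4:ℕ))⁻¹) * ((1:ℝ) + (((n₁ + m : ℤ)):ℝ)^2)⁻¹ := by
    intro m hm
    have hgm := gfun_nonneg α m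
    have hγm := hγ m hm
    have hw1 : (0:ℝ) ≤ (jbr (n₁ + m) ^ (8:ℕ))⁻¹ := by
      have := jbr_pos (n₁ + m); positivity
    have hw2 : (0:ℝ) ≤ (jbr (n₂ + m) ^ (8:ℕ))⁻¹ := by
      have := jbr_pos (n₂ + m); positivity
    have hrc4 : (0:ℝ) ≤ renC α N ^ (4:ℕ) := pow_nonneg (renC_nonneg α N) 4
    have hX1 : (0:ℝ) ≤ renC α N ^ (4:ℕ) * (1/4) * t^2 * (gfun α n₁ * gfun α n₂) :=
      mul_nonneg (mul_nonneg (mul_nonneg hrc4 (by norm_num)) (sq_nonneg t))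
        (mul_nonneg hg1 hg2)
    have hpeetre := peetre (n₁ + m) (n₂ + m)
    rw [show (n₂ + m) - (n₁ + m) = n₂ - n₁ by ring] at hpeetre
    have hb1 := Fker_norm_le α N t ht ψ n₁ m
    have hb2 := Fker_norm_le α N t ht ψ n₂ m
    have hb1n : (0:ℝ) ≤ renC α N ^ 2 * (1/2) * ‖ψ (n₁+m)‖ * (gfun α n₁ * gfun α m) * t :=
      mul_nonneg (mul_nonneg (mul_nonneg (mul_nonneg (sq_nonneg _) (by norm_num))
        (norm_nonneg _)) (mul_nonneg hg1 hgm)) ht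
    calc ‖Fker α N t ψ n₁ m * starRingEnd ℂ (Fker α N t ψ n₂ m)‖
        = ‖Fker α N t ψ n₁ m‖ * ‖Fker α N t ψ n₂ m‖ := by
          rw [norm_mul, RCLike.norm_conj]
      _ ≤ (renC α N ^ 2 * (1/2) * ‖ψ (n₁+m)‖ * (gfun α n₁ * gfun α m) * t)
          * (renC α N ^ 2 * (1/2) * ‖ψ (n₂+m)‖ * (gfun α n₂ * gfun α m) * t) :=
          mul_le_mul hb1 hb2 (norm_nonneg _) hb1n
      _ = (renC α N ^ (4:ℕ) * (1/4) * t^2 * (gfun α n₁ * gfun α n₂))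
          * ((gfun α m ^ 2) * (‖ψ (n₁+m)‖ * ‖ψ (n₂+m)‖)) := by ring
      _ ≤ (renC α N ^ (4:ℕ) * (1/4) * t^2 * (gfun α n₁ * gfun α n₂))
          * (γ * ((C * (jbr (n₁+m) ^ (8:ℕ))⁻¹) * (C * (jbr (n₂+m) ^ (8:ℕ))⁻¹))) := by
          apply mul_le_mul_of_nonneg_left _ hX1
          apply mul_le_mul hγm _ (mul_nonneg (norm_nonneg _) (norm_nonneg _)) hγ0
          exact mul_le_mul (hC _) (hC _) (norm_nonneg _) (mul_nonneg hC0 hw1)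
      _ = (renC α N ^ (4:ℕ) * (1/4) * t^2 * (gfun α n₁ * gfun α n₂) * γ * C^2)
          * ((jbr (n₁+m) ^ (8:ℕ))⁻¹ * (jbr (n₂+m) ^ (8:ℕ))⁻¹) := by ring
      _ ≤ (renC α N ^ (4:ℕ) * (1/4) * t^2 * (gfun α n₁ * gfun α n₂) * γ * C^2)
          * (4 * ((jbr (n₂ - n₁) ^ (4:ℕ))⁻¹ * (jbr (n₁ + m) ^ (4:ℕ))⁻¹)) := by
          apply mul_le_mul_of_nonneg_left hpeetre
          exact mul_nonneg (mul_nonneg hX1 hγ0) (sq_nonneg C)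
      _ = (renC α N ^ (4:ℕ) * t^2 * (gfun α n₁ * gfun α n₂) * γ * C^2
          * (jbr (n₂ - n₁) ^ (4:ℕ))⁻¹) * (jbr (n₁ + m) ^ (4:ℕ))⁻¹ := by ring
      _ ≤ (renC α N ^ (4:ℕ) * t^2 * (gfun α n₁ * gfun α n₂) * γ * C^2
          * (jbr (n₂ - n₁) ^ (4:ℕ))⁻¹) * ((1:ℝ) + (((n₁ + m : ℤ)):ℝ)^2)⁻¹ := by
          apply mul_le_mul_of_nonneg_left (v_le_u _)
          exact mul_nonneg (mul_nonneg (mul_nonneg (mul_nonneg (mul_nonneg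
            hrc4 (sq_nonneg t)) (mul_nonneg hg1 hg2)) hγ0) (sq_nonneg C)) hvd
      _ = ((Sden α N)⁻¹ * (C^2 * t^2) * γ * (gfun α n₁ * gfun α n₂)
          * (jbr (n₂ - n₁) ^ (4:ℕ))⁻¹) * ((1:ℝ) + (((n₁ + m : ℤ)):ℝ)^2)⁻¹ := by
          rw [renC_pow_four]; ring
  calc ‖∑ m ∈ Finset.Icc (-(N:ℤ)) (N:ℤ),
        Fker α N t ψ n₁ m * starRingEnd ℂ (Fker α N t ψ n₂ m)‖
      ≤ ∑ m ∈ Finset.Icc (-(N:ℤ)) (N:ℤ),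
          ‖Fker α N t ψ n₁ m * starRingEnd ℂ (Fker α N t ψ n₂ m)‖ := norm_sum_le _ _
    _ ≤ ∑ m ∈ Finset.Icc (-(N:ℤ)) (N:ℤ),
        ((Sden α N)⁻¹ * (C^2 * t^2) * γ * (gfun α n₁ * gfun α n₂)
          * (jbr (n₂ - n₁) ^ (4:ℕ))⁻¹) * ((1:ℝ) + (((n₁ + m : ℤ)):ℝ)^2)⁻¹ :=
        Finset.sum_le_sum key
    _ = ((Sden α N)⁻¹ * (C^2 * t^2) * γ * (gfun α n₁ * gfun α n₂)
          * (jbr (n₂ - n₁) ^ (4:ℕ))⁻¹)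
        * ∑ m ∈ Finset.Icc (-(N:ℤ)) (N:ℤ), ((1:ℝ) + (((n₁ + m : ℤ)):ℝ)^2)⁻¹ := by
        rw [Finset.mul_sum]
    _ ≤ ((Sden α N)⁻¹ * (C^2 * t^2) * γ * (gfun α n₁ * gfun α n₂)
          * (jbr (n₂ - n₁) ^ (4:ℕ))⁻¹) * Lam := by
        apply mul_le_mul_of_nonneg_left
        · exact sum_u_le _ (fun m => n₁ + m) (add_right_injective n₁)
        · exact mul_nonneg (mul_nonneg (mul_nonneg (mul_nonneg (inv_nonneg.2 hS.le)
            (mul_nonneg (sq_nonneg C) (sq_nonneg t))) hγ0)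
            (mul_nonneg hg1 hg2)) hvd
    _ = (Sden α N)⁻¹ * (C^2 * t^2 * Lam) * γ * (gfun α n₁ * gfun α n₂)
          * (jbr (n₂ - n₁) ^ (4:ℕ))⁻¹ := by ring

/-! ### double sum estimates -/

lemma gfun_pow_four (α : ℝ) (n : ℤ) : gfun α n ^ (4:ℕ) = (jbr n ^ (4*α))⁻¹ := by
  have h1 : gfun α n ^ (4:ℕ) = jbr n ^ ((-α) * 4) := by
    rw [gfun, ← Real.rpow_natCast (jbr n ^ (-α)) 4, ← Real.rpow_mul (jbr_nonneg n)]
    norm_num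
  rw [h1, show (-α) * 4 = -(4*α) by ring, Real.rpow_neg (jbr_nonneg n)]

lemma double_sum_A (α : ℝ) (N : ℕ) :
    ∑ n₁ ∈ Finset.Icc (-(N:ℤ)) (N:ℤ), ∑ n₂ ∈ Finset.Icc (-(N:ℤ)) (N:ℤ),
      ((gfun α n₁ * gfun α n₂)^2 * ((jbr (n₂ - n₁) ^ (4:ℕ))⁻¹)^2)
      ≤ Sden α N * Lam := by
  set I := Finset.Icc (-(N:ℤ)) (N:ℤ) with hI
  have key : ∀ n₁ ∈ I, ∀ n₂ ∈ I,
      (gfun α n₁ * gfun α n₂)^2 * ((jbr (n₂ - n₁) ^ (4:ℕ))⁻¹)^2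
      ≤ (gfun α n₁ ^ (4:ℕ) + gfun α n₂ ^ (4:ℕ)) * ((1:ℝ) + ((n₂ - n₁ : ℤ):ℝ)^2)⁻¹ := by
    intro n₁ _ n₂ _
    have hg1 := gfun_nonneg α n₁
    have hg2 := gfun_nonneg α n₂
    apply mul_le_mul _ (v_sq_le_u _) (sq_nonneg _)
      (by positivity)
    nlinarith [sq_nonneg (gfun α n₁^2 - gfun α n₂^2), sq_nonneg (gfun α n₁ * gfun α n₂)]
  calc ∑ n₁ ∈ I, ∑ n₂ ∈ I, ((gfun α n₁ * gfun α n₂)^2 * ((jbr (n₂ - n₁) ^ (4:ℕ))⁻¹)^2)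
      ≤ ∑ n₁ ∈ I, ∑ n₂ ∈ I,
        (gfun α n₁ ^ (4:ℕ) + gfun α n₂ ^ (4:ℕ)) * ((1:ℝ) + ((n₂ - n₁ : ℤ):ℝ)^2)⁻¹ := by
        apply Finset.sum_le_sum
        intro n₁ h₁
        exact Finset.sum_le_sum (fun n₂ h₂ => key n₁ h₁ n₂ h₂)
    _ = (∑ n₁ ∈ I, ∑ n₂ ∈ I, gfun α n₁ ^ (4:ℕ) * ((1:ℝ) + ((n₂ - n₁ : ℤ):ℝ)^2)⁻¹)
        + (∑ n₁ ∈ I, ∑ n₂ ∈ I, gfun α n₂ ^ (4:ℕ) * ((1:ℝ) + ((n₂ - n₁ : ℤ):ℝ)^2)⁻¹) := by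
        rw [← Finset.sum_add_distrib]
        apply Finset.sum_congr rfl
        intro n₁ _
        rw [← Finset.sum_add_distrib]
        apply Finset.sum_congr rfl
        intro n₂ _
        ring
    _ ≤ (Sden α N / 2) * Lam + (Sden α N / 2) * Lam := by
        apply add_le_add
        · calc ∑ n₁ ∈ I, ∑ n₂ ∈ I, gfun α n₁ ^ (4:ℕ) * ((1:ℝ) + ((n₂ - n₁ : ℤ):ℝ)^2)⁻¹
              = ∑ n₁ ∈ I, gfun α n₁ ^ (4:ℕ) * ∑ n₂ ∈ I, ((1:ℝ) + ((n₂ - n₁ : ℤ):ℝ)^2)⁻¹ := by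
                apply Finset.sum_congr rfl
                intro n₁ _
                rw [Finset.mul_sum]
          _ ≤ ∑ n₁ ∈ I, gfun α n₁ ^ (4:ℕ) * Lam := by
                apply Finset.sum_le_sum
                intro n₁ _
                apply mul_le_mul_of_nonneg_left _ (pow_nonneg (gfun_nonneg α n₁) 4)
                exact sum_u_le I (fun n₂ => n₂ - n₁) (fun a b h => by dsimp at h; omega)
          _ = (Sden α N / 2) * Lam := by
                rw [← Finset.sum_mul, sum_gfun_pow_four]
        · calc ∑ n₁ ∈ I, ∑ n₂ ∈ I, gfun α n₂ ^ (4:ℕ) * ((1:ℝ) + ((n₂ - n₁ : ℤ):ℝ)^2)⁻¹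
              = ∑ n₂ ∈ I, ∑ n₁ ∈ I, gfun α n₂ ^ (4:ℕ) * ((1:ℝ) + ((n₂ - n₁ : ℤ):ℝ)^2)⁻¹ :=
                Finset.sum_comm
          _ = ∑ n₂ ∈ I, gfun α n₂ ^ (4:ℕ) * ∑ n₁ ∈ I, ((1:ℝ) + ((n₂ - n₁ : ℤ):ℝ)^2)⁻¹ := by
                apply Finset.sum_congr rfl
                intro n₂ _
                rw [Finset.mul_sum]
          _ ≤ ∑ n₂ ∈ I, gfun α n₂ ^ (4:ℕ) * Lam := by
                apply Finset.sum_le_sum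
                intro n₂ _
                apply mul_le_mul_of_nonneg_left _ (pow_nonneg (gfun_nonneg α n₂) 4)
                exact sum_u_le I (fun n₁ => n₂ - n₁) (fun a b h => by dsimp at h; omega)
          _ = (Sden α N / 2) * Lam := by
                rw [← Finset.sum_mul, sum_gfun_pow_four]
    _ = Sden α N * Lam := by ring

lemma card_I (N : ℕ) : ((Finset.Icc (-(N:ℤ)) (N:ℤ)).card : ℝ) = 2*(N:ℝ)+1 := by
  rw [Int.card_Icc]
  have : ((N:ℤ) + 1 - (-(N:ℤ))).toNat = 2*N+1 := by omega
  rw [this]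
  push_cast
  ring

lemma double_sum_B (N : ℕ) :
    ∑ n₁ ∈ Finset.Icc (-(N:ℤ)) (N:ℤ), ∑ n₂ ∈ Finset.Icc (-(N:ℤ)) (N:ℤ),
      ((jbr (n₂ - n₁) ^ (4:ℕ))⁻¹)^2 ≤ (2*(N:ℝ)+1) * Lam := by
  set I := Finset.Icc (-(N:ℤ)) (N:ℤ) with hI
  calc ∑ n₁ ∈ I, ∑ n₂ ∈ I, ((jbr (n₂ - n₁) ^ (4:ℕ))⁻¹)^2
      ≤ ∑ n₁ ∈ I, ∑ n₂ ∈ I, ((1:ℝ) + ((n₂ - n₁ : ℤ):ℝ)^2)⁻¹ := by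
        apply Finset.sum_le_sum
        intro n₁ _
        exact Finset.sum_le_sum (fun n₂ _ => v_sq_le_u _)
    _ ≤ ∑ _n₁ ∈ I, Lam := by
        apply Finset.sum_le_sum
        intro n₁ _
        exact sum_u_le I (fun n₂ => n₂ - n₁) (fun a b h => by dsimp at h; omega)
    _ = (I.card : ℝ) * Lam := by rw [Finset.sum_const, nsmul_eq_mul]
    _ = (2*(N:ℝ)+1) * Lam := by rw [card_I]

/-! ### lower bounds for Sden -/

lemma Sden_ge_harmonic (α : ℝ) (hα0 : 0 ≤ α) (hα : α ≤ 1/4) (N : ℕ) :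
    ∑ i ∈ Finset.range (N+1), (1/((i:ℝ)+1)) ≤ Sden α N := by
  have hsub : Finset.Icc (0:ℤ) (N:ℤ) ⊆ Finset.Icc (-(N:ℤ)) (N:ℤ) :=
    Finset.Icc_subset_Icc (by omega) le_rfl
  have hterm : ∀ n ∈ Finset.Icc (0:ℤ) (N:ℤ), (1:ℝ)/((n:ℝ)+1) ≤ 2 / jbr n ^ (4*α) := by
    intro n hn
    rw [Finset.mem_Icc] at hn
    have hn0 : (0:ℝ) ≤ (n:ℝ) := by exact_mod_cast hn.1
    have hrp : (0:ℝ) < jbr n ^ (4*α) := Real.rpow_pos_of_pos (jbr_pos n) _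
    have h1 : jbr n ^ (4*α) ≤ jbr n ^ (1:ℝ) :=
      Real.rpow_le_rpow_of_exponent_le (jbr_one_le n) (by linarith)
    rw [Real.rpow_one] at h1
    have h2 : jbr n ≤ (n:ℝ) + 1 := jbr_le_succ hn.1
    have h3 : (1:ℝ)/((n:ℝ)+1) ≤ 1 / jbr n ^ (4*α) :=
      one_div_le_one_div_of_le hrp (by linarith)
    have h4 : (1:ℝ) / jbr n ^ (4*α) ≤ 2 / jbr n ^ (4*α) := by
      rw [div_le_div_iff₀ hrp hrp]
      nlinarith
    linarith
  have hmap : Finset.Icc (0:ℤ) (N:ℤ)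
      = (Finset.range (N+1)).map ⟨(Nat.cast : ℕ → ℤ), Nat.cast_injective⟩ := by
    ext x
    simp only [Finset.mem_Icc, Finset.mem_map, Finset.mem_range,
      Function.Embedding.coeFn_mk]
    constructor
    · rintro ⟨h0, hN2⟩
      exact ⟨x.toNat, by omega, by omega⟩
    · rintro ⟨a, ha, rfl⟩
      omega
  have heq : ∑ n ∈ Finset.Icc (0:ℤ) (N:ℤ), (1:ℝ)/((n:ℝ)+1)
      = ∑ i ∈ Finset.range (N+1), (1/((i:ℝ)+1)) := by
    rw [hmap, Finset.sum_map]
    apply Finset.sum_congr rfl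
    intro i _
    simp only [Function.Embedding.coeFn_mk]
    norm_num
  calc ∑ i ∈ Finset.range (N+1), (1/((i:ℝ)+1))
      = ∑ n ∈ Finset.Icc (0:ℤ) (N:ℤ), (1:ℝ)/((n:ℝ)+1) := heq.symm
    _ ≤ ∑ n ∈ Finset.Icc (0:ℤ) (N:ℤ), 2 / jbr n ^ (4*α) := Finset.sum_le_sum hterm
    _ ≤ Sden α N := by
        apply Finset.sum_le_sum_of_subset_of_nonneg hsub
        intro n _ _
        have := Real.rpow_pos_of_pos (jbr_pos n) (4*α)
        positivity

lemma Sden_ge_B (α : ℝ) (N : ℕ) (hN : 1 ≤ N) (hα : α ≤ 0) :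
    (N:ℝ) * (((N:ℝ)/2) ^ (-α)) ^ (4:ℕ) ≤ Sden α N := by
  set X := ((N:ℝ)/2) ^ (-α) with hX
  have hN0 : (0:ℝ) < (N:ℝ) := by exact_mod_cast hN
  have hX0 : (0:ℝ) ≤ X := Real.rpow_nonneg (by positivity) _
  set J := Finset.Icc ((N:ℤ) - (N/2:ℕ)) (N:ℤ) with hJ
  have hsub : J ⊆ Finset.Icc (-(N:ℤ)) (N:ℤ) := by
    rw [hJ]
    apply Finset.Icc_subset_Icc _ le_rfl
    omega
  have hterm : ∀ n ∈ J, 2 * X^(4:ℕ) ≤ 2 / jbr n ^ (4*α) := by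
    intro n hn
    rw [hJ, Finset.mem_Icc] at hn
    have hcast : ((N/2:ℕ):ℝ) ≤ (N:ℝ)/2 := Nat.cast_div_le
    have h2 : (N:ℝ) - ((N/2:ℕ):ℝ) ≤ (n:ℝ) := by
      have := hn.1
      push_cast
      exact_mod_cast (by exact_mod_cast this : ((N:ℤ) - ((N/2:ℕ):ℤ) : ℤ) ≤ n)
    have hhalf : ((N:ℝ)/2) ≤ (n:ℝ) := by linarith
    have hjn : ((N:ℝ)/2) ≤ jbr n :=
      le_trans hhalf (le_trans (le_abs_self _) (abs_le_jbr n))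
    have h3 : X ≤ jbr n ^ (-α) := Real.rpow_le_rpow (by positivity) hjn (by linarith)
    have h4 : X^(4:ℕ) ≤ gfun α n ^ (4:ℕ) := pow_le_pow_left₀ hX0 h3 4
    have h5 : 2 / jbr n ^ (4*α) = 2 * gfun α n ^ (4:ℕ) := by
      rw [gfun_pow_four, div_eq_mul_inv]
    rw [h5]
    linarith
  have hcard : J.card = N/2 + 1 := by
    rw [hJ, Int.card_Icc]
    omega
  calc (N:ℝ) * X^(4:ℕ) ≤ (J.card:ℝ) * (2*X^(4:ℕ)) := by
        rw [hcard]
        have hcc : (N:ℝ) ≤ 2*((N/2:ℕ):ℝ) + 2 := by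
          have : N ≤ 2*(N/2) + 2 := by omega
          exact_mod_cast this
        push_cast
        nlinarith [pow_nonneg hX0 4]
    _ ≤ ∑ n ∈ J, 2 / jbr n ^ (4*α) := by
        have := Finset.card_nsmul_le_sum J (fun n => 2 / jbr n ^ (4*α)) (2*X^(4:ℕ)) hterm
        rwa [nsmul_eq_mul] at this
    _ ≤ Sden α N := by
        apply Finset.sum_le_sum_of_subset_of_nonneg hsub
        intro n _ _
        have := Real.rpow_pos_of_pos (jbr_pos n) (4*α)
        positivity

/-! ### main theorem -/


/-- The one-contraction `L²(𝕋²)` norm of the kernel `f^t_{N,ψ}` tends to zero: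
for `α ≤ 1/4`, `t ≥ 0` and rapidly decreasing `ψ̂`,
`‖f^t_{N,ψ} ⊗₁ f^t_{N,ψ}‖_{L²(𝕋²)} → 0` as `N → ∞`. -/
theorem contraction_norm_tendsto_zero (α t : ℝ) (hα : α ≤ 1 / 4) (ht : 0 ≤ t)
    (ψ : ℤ → ℂ) (hψ : ∀ k : ℕ, ∃ C : ℝ, ∀ n : ℤ, ‖ψ n‖ ≤ C * jbr n ^ (-(k : ℝ))) :
    Tendsto (fun N : ℕ =>
      Real.sqrt (∑' p : ℤ × ℤ,
        ‖∑' m : ℤ, Fker α N t ψ p.1 m * starRingEnd ℂ (Fker α N t ψ p.2 m)‖ ^ 2))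
      atTop (nhds 0) := by
  obtain ⟨C, hCraw⟩ := hψ 8
  have hC : ∀ j : ℤ, ‖ψ j‖ ≤ C * (jbr j ^ (8:ℕ))⁻¹ := by
    intro j
    have h := hCraw j
    rwa [show jbr j ^ (-((8:ℕ) : ℝ)) = (jbr j ^ (8:ℕ))⁻¹ by
      rw [Real.rpow_neg (jbr_nonneg j), Real.rpow_natCast]] at h
  have hC0 : 0 ≤ C := by
    have h := hC 0
    have hj : jbr 0 = 1 := by rw [jbr]; norm_num
    rw [hj, one_pow, inv_one, mul_one] at h
    exact le_trans (norm_nonneg _) h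
  -- the common bound
  have main : ∀ (N : ℕ) (γ : ℝ), 0 ≤ γ →
      (∀ m ∈ Finset.Icc (-(N:ℤ)) (N:ℤ), gfun α m ^ 2 ≤ γ) →
      (∑' p : ℤ × ℤ,
        ‖∑' m : ℤ, Fker α N t ψ p.1 m * starRingEnd ℂ (Fker α N t ψ p.2 m)‖ ^ 2)
      ≤ ((Sden α N)⁻¹ * (C^2*t^2*Lam) * γ)^2
        * ∑ n₁ ∈ Finset.Icc (-(N:ℤ)) (N:ℤ), ∑ n₂ ∈ Finset.Icc (-(N:ℤ)) (N:ℤ),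
            ((gfun α n₁ * gfun α n₂)^2 * ((jbr (n₂ - n₁) ^ (4:ℕ))⁻¹)^2) := by
    intro N γ hγ0 hγ
    rw [tsum_red α N t ψ]
    calc ∑ p ∈ (Finset.Icc (-(N:ℤ)) (N:ℤ)) ×ˢ (Finset.Icc (-(N:ℤ)) (N:ℤ)),
          ‖∑ m ∈ Finset.Icc (-(N:ℤ)) (N:ℤ),
            Fker α N t ψ p.1 m * starRingEnd ℂ (Fker α N t ψ p.2 m)‖ ^ 2
        ≤ ∑ p ∈ (Finset.Icc (-(N:ℤ)) (N:ℤ)) ×ˢ (Finset.Icc (-(N:ℤ)) (N:ℤ)),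
          (((Sden α N)⁻¹ * (C^2*t^2*Lam) * γ)^2
            * ((gfun α p.1 * gfun α p.2)^2 * ((jbr (p.2 - p.1) ^ (4:ℕ))⁻¹)^2)) := by
          apply Finset.sum_le_sum
          intro p _
          have hb := pair_bound α t C ht hC0 ψ hC N γ hγ0 hγ p.1 p.2
          calc ‖∑ m ∈ Finset.Icc (-(N:ℤ)) (N:ℤ),
                Fker α N t ψ p.1 m * starRingEnd ℂ (Fker α N t ψ p.2 m)‖ ^ 2
              ≤ ((Sden α N)⁻¹ * (C^2 * t^2 * Lam) * γ * (gfun α p.1 * gfun α p.2)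
                  * (jbr (p.2 - p.1) ^ (4:ℕ))⁻¹)^2 :=
                pow_le_pow_left₀ (norm_nonneg _) hb 2
            _ = ((Sden α N)⁻¹ * (C^2*t^2*Lam) * γ)^2
                * ((gfun α p.1 * gfun α p.2)^2 * ((jbr (p.2 - p.1) ^ (4:ℕ))⁻¹)^2) := by
                ring
      _ = ((Sden α N)⁻¹ * (C^2*t^2*Lam) * γ)^2
          * ∑ n₁ ∈ Finset.Icc (-(N:ℤ)) (N:ℤ), ∑ n₂ ∈ Finset.Icc (-(N:ℤ)) (N:ℤ),
              ((gfun α n₁ * gfun α n₂)^2 * ((jbr (n₂ - n₁) ^ (4:ℕ))⁻¹)^2) := by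
          rw [Finset.sum_product]
          simp_rw [← Finset.mul_sum]
  rcases le_or_gt 0 α with hα0 | hα0
  · -- case 0 ≤ α
    have hγ : ∀ (N : ℕ), ∀ m ∈ Finset.Icc (-(N:ℤ)) (N:ℤ), gfun α m ^ 2 ≤ 1 := by
      intro N m _
      have h1 : gfun α m ≤ 1 :=
        Real.rpow_le_one_of_one_le_of_nonpos (jbr_one_le m) (by linarith)
      have h2 := gfun_nonneg α m
      nlinarith
    have hbound : ∀ N : ℕ,
        (∑' p : ℤ × ℤ,
          ‖∑' m : ℤ, Fker α N t ψ p.1 m * starRingEnd ℂ (Fker α N t ψ p.2 m)‖ ^ 2)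
        ≤ (C^2*t^2*Lam)^2 * Lam / Sden α N := by
      intro N
      have hS := Sden_pos α N
      calc (∑' p : ℤ × ℤ,
            ‖∑' m : ℤ, Fker α N t ψ p.1 m * starRingEnd ℂ (Fker α N t ψ p.2 m)‖ ^ 2)
          ≤ ((Sden α N)⁻¹ * (C^2*t^2*Lam) * 1)^2
            * ∑ n₁ ∈ Finset.Icc (-(N:ℤ)) (N:ℤ), ∑ n₂ ∈ Finset.Icc (-(N:ℤ)) (N:ℤ),
                ((gfun α n₁ * gfun α n₂)^2 * ((jbr (n₂ - n₁) ^ (4:ℕ))⁻¹)^2) :=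
            main N 1 zero_le_one (hγ N)
        _ ≤ ((Sden α N)⁻¹ * (C^2*t^2*Lam) * 1)^2 * (Sden α N * Lam) :=
            mul_le_mul_of_nonneg_left (double_sum_A α N) (sq_nonneg _)
        _ = (C^2*t^2*Lam)^2 * Lam / Sden α N := by
            field_simp
    have hS : Tendsto (fun N : ℕ => Sden α N) atTop atTop := by
      apply tendsto_atTop_mono (fun N => Sden_ge_harmonic α hα0 hα N)
      exact Real.tendsto_sum_range_one_div_nat_succ_atTop.comp (tendsto_add_atTop_nat 1)
    have hE : Tendsto (fun N : ℕ => (C^2*t^2*Lam)^2 * Lam / Sden α N) atTop (nhds 0) :=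
      Tendsto.div_atTop tendsto_const_nhds hS
    apply squeeze_zero (fun N => Real.sqrt_nonneg _)
      (fun N => Real.sqrt_le_sqrt (hbound N))
    have := (Real.continuous_sqrt.tendsto' 0 0 Real.sqrt_zero).comp hE
    exact this
  · -- case α < 0
    set A1 := (C^2*t^2*Lam)^2 * Lam with hA1
    have hA1n : 0 ≤ A1 := by
      have := Lam_nonneg
      positivity
    have hbound : ∀ N : ℕ,
        (∑' p : ℤ × ℤ,
          ‖∑' m : ℤ, Fker α N t ψ p.1 m * starRingEnd ℂ (Fker α N t ψ p.2 m)‖ ^ 2)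
        ≤ A1 * ((2*(N:ℝ)+1) * gfun α (N:ℤ)^(8:ℕ)) / (Sden α N)^2 := by
      intro N
      have hS := Sden_pos α N
      set γ := gfun α (N:ℤ)^2 with hγdef
      have hγ0 : 0 ≤ γ := sq_nonneg _
      have hγ : ∀ m ∈ Finset.Icc (-(N:ℤ)) (N:ℤ), gfun α m ^ 2 ≤ γ := by
        intro m hm
        rw [memI_iff] at hm
        have h1 : gfun α m ≤ gfun α (N:ℤ) :=
          Real.rpow_le_rpow (jbr_nonneg m) (jbr_mono hm) (by linarith)
        exact pow_le_pow_left₀ (gfun_nonneg α m) h1 2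
      have hdsum : ∑ n₁ ∈ Finset.Icc (-(N:ℤ)) (N:ℤ), ∑ n₂ ∈ Finset.Icc (-(N:ℤ)) (N:ℤ),
            ((gfun α n₁ * gfun α n₂)^2 * ((jbr (n₂ - n₁) ^ (4:ℕ))⁻¹)^2)
          ≤ γ^2 * ((2*(N:ℝ)+1) * Lam) := by
        calc ∑ n₁ ∈ Finset.Icc (-(N:ℤ)) (N:ℤ), ∑ n₂ ∈ Finset.Icc (-(N:ℤ)) (N:ℤ),
              ((gfun α n₁ * gfun α n₂)^2 * ((jbr (n₂ - n₁) ^ (4:ℕ))⁻¹)^2)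
            ≤ ∑ n₁ ∈ Finset.Icc (-(N:ℤ)) (N:ℤ), ∑ n₂ ∈ Finset.Icc (-(N:ℤ)) (N:ℤ),
              (γ^2 * ((jbr (n₂ - n₁) ^ (4:ℕ))⁻¹)^2) := by
              apply Finset.sum_le_sum
              intro n₁ h₁
              apply Finset.sum_le_sum
              intro n₂ h₂
              apply mul_le_mul_of_nonneg_right _ (sq_nonneg _)
              have e : (gfun α n₁ * gfun α n₂)^2 = gfun α n₁^2 * gfun α n₂^2 := by ring
              rw [e, hγdef]
              have h1 := hγ n₁ h₁
              have h2 := hγ n₂ h₂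
              have h3 := sq_nonneg (gfun α n₁)
              have h4 := sq_nonneg (gfun α (N:ℤ))
              calc gfun α n₁^2 * gfun α n₂^2 ≤ gfun α n₁^2 * gfun α (N:ℤ)^2 :=
                    mul_le_mul_of_nonneg_left h2 h3
                _ ≤ gfun α (N:ℤ)^2 * gfun α (N:ℤ)^2 :=
                    mul_le_mul_of_nonneg_right h1 h4
                _ = (gfun α (N:ℤ)^2)^2 := by ring
          _ = γ^2 * ∑ n₁ ∈ Finset.Icc (-(N:ℤ)) (N:ℤ), ∑ n₂ ∈ Finset.Icc (-(N:ℤ)) (N:ℤ),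
              ((jbr (n₂ - n₁) ^ (4:ℕ))⁻¹)^2 := by
              simp_rw [← Finset.mul_sum]
          _ ≤ γ^2 * ((2*(N:ℝ)+1) * Lam) :=
              mul_le_mul_of_nonneg_left (double_sum_B N) (sq_nonneg _)
      calc (∑' p : ℤ × ℤ,
            ‖∑' m : ℤ, Fker α N t ψ p.1 m * starRingEnd ℂ (Fker α N t ψ p.2 m)‖ ^ 2)
          ≤ ((Sden α N)⁻¹ * (C^2*t^2*Lam) * γ)^2
            * ∑ n₁ ∈ Finset.Icc (-(N:ℤ)) (N:ℤ), ∑ n₂ ∈ Finset.Icc (-(N:ℤ)) (N:ℤ),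
                ((gfun α n₁ * gfun α n₂)^2 * ((jbr (n₂ - n₁) ^ (4:ℕ))⁻¹)^2) :=
            main N γ hγ0 hγ
        _ ≤ ((Sden α N)⁻¹ * (C^2*t^2*Lam) * γ)^2 * (γ^2 * ((2*(N:ℝ)+1) * Lam)) :=
            mul_le_mul_of_nonneg_left hdsum (sq_nonneg _)
        _ = A1 * ((2*(N:ℝ)+1) * gfun α (N:ℤ)^(8:ℕ)) / (Sden α N)^2 := by
            rw [hγdef, hA1]
            field_simp
    -- the explicit bound tends to zero
    set Q := (2*Real.sqrt 2) ^ (-α) with hQ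
    have hQ0 : 0 < Q := Real.rpow_pos_of_pos (by positivity) _
    have hEB : ∀ N : ℕ, 1 ≤ N →
        A1 * ((2*(N:ℝ)+1) * gfun α (N:ℤ)^(8:ℕ)) / (Sden α N)^2
          ≤ (3 * A1 * Q^(8:ℕ)) / (N:ℝ) := by
      intro N hN
      have hN0 : (0:ℝ) < (N:ℝ) := by exact_mod_cast hN
      have hN1 : (1:ℝ) ≤ (N:ℝ) := by exact_mod_cast hN
      set X := ((N:ℝ)/2) ^ (-α) with hX
      have hX0 : (0:ℝ) < X := Real.rpow_pos_of_pos (by positivity) _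
      have hg0 : 0 ≤ gfun α (N:ℤ) := gfun_nonneg _ _
      have hjb : jbr (N:ℤ) ≤ (2*Real.sqrt 2) * ((N:ℝ)/2) := by
        have h1 : jbr (N:ℤ) ≤ Real.sqrt 2 * (N:ℝ) := by
          rw [jbr]
          have h2 : (1:ℝ) + ((N:ℤ):ℝ)^2 ≤ 2 * (N:ℝ)^2 := by
            push_cast
            nlinarith [hN1]
          calc Real.sqrt (1 + ((N:ℤ):ℝ)^2) ≤ Real.sqrt (2 * (N:ℝ)^2) :=
                Real.sqrt_le_sqrt h2
            _ = Real.sqrt 2 * Real.sqrt ((N:ℝ)^2) := Real.sqrt_mul (by norm_num) _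
            _ = Real.sqrt 2 * (N:ℝ) := by rw [Real.sqrt_sq hN0.le]
        calc jbr (N:ℤ) ≤ Real.sqrt 2 * (N:ℝ) := h1
          _ = (2*Real.sqrt 2) * ((N:ℝ)/2) := by ring
      have hgQX : gfun α (N:ℤ) ≤ Q * X := by
        have h1 : gfun α (N:ℤ) ≤ ((2*Real.sqrt 2) * ((N:ℝ)/2)) ^ (-α) :=
          Real.rpow_le_rpow (jbr_nonneg _) hjb (by linarith)
        rwa [Real.mul_rpow (by positivity) (by positivity), ← hQ, ← hX] at h1
      have hg8 : gfun α (N:ℤ)^(8:ℕ) ≤ Q^(8:ℕ) * X^(8:ℕ) := by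
        calc gfun α (N:ℤ)^(8:ℕ) ≤ (Q*X)^(8:ℕ) := pow_le_pow_left₀ hg0 hgQX 8
          _ = Q^(8:ℕ) * X^(8:ℕ) := mul_pow _ _ _
      have hSd : (N:ℝ) * X^(4:ℕ) ≤ Sden α N := by
        have := Sden_ge_B α N hN (by linarith)
        rwa [← hX] at this
      have hSd2 : ((N:ℝ) * X^(4:ℕ))^2 ≤ (Sden α N)^2 :=
        pow_le_pow_left₀ (by positivity) hSd 2
      have hd : (0:ℝ) < ((N:ℝ) * X^(4:ℕ))^2 := by positivity
      calc A1 * ((2*(N:ℝ)+1) * gfun α (N:ℤ)^(8:ℕ)) / (Sden α N)^2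
          ≤ A1 * ((3*(N:ℝ)) * (Q^(8:ℕ) * X^(8:ℕ))) / (((N:ℝ) * X^(4:ℕ))^2) := by
            apply div_le_div₀ _ _ hd hSd2
            · apply mul_nonneg hA1n
              positivity
            · apply mul_le_mul_of_nonneg_left _ hA1n
              apply mul_le_mul _ hg8 (by positivity) (by positivity)
              linarith
        _ = (3 * A1 * Q^(8:ℕ)) / (N:ℝ) := by
            field_simp
    have hEB0 : Tendsto (fun N : ℕ =>
        A1 * ((2*(N:ℝ)+1) * gfun α (N:ℤ)^(8:ℕ)) / (Sden α N)^2) atTop (nhds 0) := by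
      apply squeeze_zero' (g := fun N : ℕ => (3 * A1 * Q^(8:ℕ)) / (N:ℝ))
      · filter_upwards with N
        have hS := Sden_pos α N
        have hg0 : 0 ≤ gfun α (N:ℤ) := gfun_nonneg _ _
        have h1 : (0:ℝ) ≤ (2*(N:ℝ)+1) := by positivity
        apply div_nonneg (mul_nonneg hA1n (mul_nonneg h1 (pow_nonneg hg0 8)))
        positivity
      · filter_upwards [Filter.eventually_ge_atTop 1] with N hN
        exact hEB N hN
      · exact tendsto_const_div_atTop_nhds_zero_nat _
    apply squeeze_zero (fun N => Real.sqrt_nonneg _)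
      (fun N => Real.sqrt_le_sqrt (hbound N))
    have := (Real.continuous_sqrt.tendsto' 0 0 Real.sqrt_zero).comp hEB0
    exact this
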